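/- arXiv:1104.3621 — 2 statements merged into one kernel-verified Lean document; each statement's English description precedes it below -/
import Mathlib

section
/- For the phase b(r,θ,r',θ',r̃) = r(1 - r̃ cos(θ-ω)) - r'(1 - r̃ cos(θ'-ω)) - r̃ α, with fixed ω, α ∈ ℝ, a point with r, r', r̃ > 0 is a critical point of b (all five partial derivatives vanish) if and only if r̃ = 1, θ ≡ ω, θ' ≡ ω (mod 2π), and r = r' - α. -/
open scoped Real

theorem critical_points_of_5d_phase (ω α : ℝ)
    (b : ℝ → ℝ → ℝ → ℝ → ℝ → ℝ)
    (hb : ∀ r θ r' θ' rt,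
      b r θ r' θ' rt = r * (1 - rt * Real.cos (θ - ω))
        - r' * (1 - rt * Real.cos (θ' - ω)) - rt * α) :
    ∀ r θ r' θ' rt : ℝ, 0 < r → 0 < r' → 0 < rt →
      ((deriv (fun x => b x θ r' θ' rt) r = 0 ∧
        deriv (fun x => b r x r' θ' rt) θ = 0 ∧
        deriv (fun x => b r θ x θ' rt) r' = 0 ∧
        deriv (fun x => b r θ r' x rt) θ' = 0 ∧
        deriv (fun x => b r θ r' θ' x) rt = 0) ↔
      (rt = 1 ∧ (∃ n : ℤ, θ = ω + n * (2 * π)) ∧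
        (∃ n : ℤ, θ' = ω + n * (2 * π)) ∧ r = r' - α)) := by
  intro r θ r' θ' rt hr hr' hrt
  have hcosθ : HasDerivAt (fun x : ℝ => Real.cos (x - ω)) (-Real.sin (θ - ω)) θ := by
    simpa using ((hasDerivAt_id θ).sub_const ω).cos
  have hcosθ' : HasDerivAt (fun x : ℝ => Real.cos (x - ω)) (-Real.sin (θ' - ω)) θ' := by
    simpa using ((hasDerivAt_id θ').sub_const ω).cos
  have h1 : deriv (fun x => b x θ r' θ' rt) r = 1 - rt * Real.cos (θ - ω) := by
    have : HasDerivAt (fun x : ℝ => x * (1 - rt * Real.cos (θ - ω))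
        - r' * (1 - rt * Real.cos (θ' - ω)) - rt * α) (1 - rt * Real.cos (θ - ω)) r := by
      simpa using (((hasDerivAt_id r).mul_const (1 - rt * Real.cos (θ - ω))).sub_const
        (r' * (1 - rt * Real.cos (θ' - ω)))).sub_const (rt * α)
    simpa [funext fun x => hb x θ r' θ' rt] using this.deriv
  have h2 : deriv (fun x => b r x r' θ' rt) θ = r * (rt * Real.sin (θ - ω)) := by
    have : HasDerivAt (fun x : ℝ => r * (1 - rt * Real.cos (x - ω))
        - r' * (1 - rt * Real.cos (θ' - ω)) - rt * α) (r * (rt * Real.sin (θ - ω))) θ := by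
      have := ((((hcosθ.const_mul rt).const_sub 1).const_mul r).sub_const
        (r' * (1 - rt * Real.cos (θ' - ω)))).sub_const (rt * α)
      exact this.congr_deriv (by ring)
    simpa [funext fun x => hb r x r' θ' rt] using this.deriv
  have h3 : deriv (fun x => b r θ x θ' rt) r' = -(1 - rt * Real.cos (θ' - ω)) := by
    have : HasDerivAt (fun x : ℝ => r * (1 - rt * Real.cos (θ - ω))
        - x * (1 - rt * Real.cos (θ' - ω)) - rt * α) (-(1 - rt * Real.cos (θ' - ω))) r' := by
      have := (((hasDerivAt_id r').mul_const (1 - rt * Real.cos (θ' - ω))).const_sub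
        (r * (1 - rt * Real.cos (θ - ω)))).sub_const (rt * α)
      exact this.congr_deriv (by ring)
    simpa [funext fun x => hb r θ x θ' rt] using this.deriv
  have h4 : deriv (fun x => b r θ r' x rt) θ' = -(r' * (rt * Real.sin (θ' - ω))) := by
    have : HasDerivAt (fun x : ℝ => r * (1 - rt * Real.cos (θ - ω))
        - r' * (1 - rt * Real.cos (x - ω)) - rt * α) (-(r' * (rt * Real.sin (θ' - ω)))) θ' := by
      have := ((((hcosθ'.const_mul rt).const_sub 1).const_mul r').const_sub
        (r * (1 - rt * Real.cos (θ - ω)))).sub_const (rt * α)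
      exact this.congr_deriv (by ring)
    simpa [funext fun x => hb r θ r' x rt] using this.deriv
  have h5 : deriv (fun x => b r θ r' θ' x) rt
      = -(r * Real.cos (θ - ω)) + r' * Real.cos (θ' - ω) - α := by
    have : HasDerivAt (fun x : ℝ => r * (1 - x * Real.cos (θ - ω))
        - r' * (1 - x * Real.cos (θ' - ω)) - x * α)
        (-(r * Real.cos (θ - ω)) + r' * Real.cos (θ' - ω) - α) rt := by
      have ha : HasDerivAt (fun x : ℝ => r * (1 - x * Real.cos (θ - ω)))
          (-(r * Real.cos (θ - ω))) rt := by
        have := (((hasDerivAt_id rt).mul_const (Real.cos (θ - ω))).const_sub 1).const_mul r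
        exact this.congr_deriv (by ring)
      have hb2 : HasDerivAt (fun x : ℝ => r' * (1 - x * Real.cos (θ' - ω)))
          (-(r' * Real.cos (θ' - ω))) rt := by
        have := (((hasDerivAt_id rt).mul_const (Real.cos (θ' - ω))).const_sub 1).const_mul r'
        exact this.congr_deriv (by ring)
      have := (ha.sub hb2).sub ((hasDerivAt_id rt).mul_const α)
      exact this.congr_deriv (by ring)
    simpa [funext fun x => hb r θ r' θ' x] using this.deriv
  rw [h1, h2, h3, h4, h5]
  constructor
  · rintro ⟨e1, e2, e3, e4, e5⟩
    have hsθ : Real.sin (θ - ω) = 0 := by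
      rcases mul_eq_zero.1 e2 with h | h
      · exact absurd h hr.ne'
      · rcases mul_eq_zero.1 h with h | h
        · exact absurd h hrt.ne'
        · exact h
    have hsθ' : Real.sin (θ' - ω) = 0 := by
      have e4' : r' * (rt * Real.sin (θ' - ω)) = 0 := by linarith
      rcases mul_eq_zero.1 e4' with h | h
      · exact absurd h hr'.ne'
      · rcases mul_eq_zero.1 h with h | h
        · exact absurd h hrt.ne'
        · exact h
    have hrc : rt * Real.cos (θ - ω) = 1 := by linarith
    have hrc' : rt * Real.cos (θ' - ω) = 1 := by linarith
    have pyth : Real.sin (θ - ω) ^ 2 + Real.cos (θ - ω) ^ 2 = 1 := Real.sin_sq_add_cos_sq _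
    have pyth' : Real.sin (θ' - ω) ^ 2 + Real.cos (θ' - ω) ^ 2 = 1 := Real.sin_sq_add_cos_sq _
    have hcpos : 0 < Real.cos (θ - ω) := by
      by_contra h
      push_neg at h
      have := mul_nonpos_of_nonneg_of_nonpos hrt.le h
      linarith
    have hcpos' : 0 < Real.cos (θ' - ω) := by
      by_contra h
      push_neg at h
      have := mul_nonpos_of_nonneg_of_nonpos hrt.le h
      linarith
    rw [hsθ] at pyth
    rw [hsθ'] at pyth'
    have hfac : (Real.cos (θ - ω) - 1) * (Real.cos (θ - ω) + 1) = 0 := by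
      linear_combination pyth
    have hfac' : (Real.cos (θ' - ω) - 1) * (Real.cos (θ' - ω) + 1) = 0 := by
      linear_combination pyth' 
    have hcθ : Real.cos (θ - ω) = 1 := by
      rcases mul_eq_zero.1 hfac with h | h
      · linarith
      · linarith
    have hcθ' : Real.cos (θ' - ω) = 1 := by
      rcases mul_eq_zero.1 hfac' with h | h
      · linarith
      · linarith
    have hrt1 : rt = 1 := by
      rw [hcθ] at hrc
      linarith
    obtain ⟨n, hn⟩ := (Real.cos_eq_one_iff _).1 hcθ
    obtain ⟨m, hm⟩ := (Real.cos_eq_one_iff _).1 hcθ'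
    refine ⟨hrt1, ⟨n, by linarith⟩, ⟨m, by linarith⟩, ?_⟩
    rw [hcθ, hcθ'] at e5
    linarith
  · rintro ⟨hrt1, ⟨n, hn⟩, ⟨m, hm⟩, hrα⟩
    have hcθ : Real.cos (θ - ω) = 1 := by
      rw [hn]; simpa using Real.cos_int_mul_two_pi n
    have hcθ' : Real.cos (θ' - ω) = 1 := by
      rw [hm]; simpa using Real.cos_int_mul_two_pi m
    have hsθ : Real.sin (θ - ω) = 0 := by
      have := Real.sin_sq_add_cos_sq (θ - ω)
      nlinarith [sq_nonneg (Real.sin (θ - ω))]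
    have hsθ' : Real.sin (θ' - ω) = 0 := by
      have := Real.sin_sq_add_cos_sq (θ' - ω)
      nlinarith [sq_nonneg (Real.sin (θ' - ω))]
    rw [hcθ, hcθ', hsθ, hsθ', hrt1]
    refine ⟨by ring, by ring, by ring, by ring, by linarith⟩
end

section
/- For the phase γ(r,θ,r̃) = r(1 - r̃ cos(θ-ω)) + r' r̃ cos(θ'-ω) - r̃ α with fixed r', θ', ω, α, a point with r, r̃ > 0 is a critical point if and only if r̃ = 1, θ ≡ ω (mod 2π), and r = r' cos(θ'-ω) - α. In particular if r' cos(θ'-ω) - α ≤ 0, γ has no critical points in the region r > 0, r̃ > 0. -/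
open scoped Real

theorem critical_points_of_3d_phase (r' θ' ω α : ℝ) (hr' : 0 < r')
    (γ : ℝ → ℝ → ℝ → ℝ)
    (hγ : ∀ r θ rt,
      γ r θ rt = r * (1 - rt * Real.cos (θ - ω))
        + r' * rt * Real.cos (θ' - ω) - rt * α) :
    (∀ r θ rt : ℝ, 0 < r → 0 < rt →
      ((deriv (fun x => γ x θ rt) r = 0 ∧
        deriv (fun x => γ r x rt) θ = 0 ∧
        deriv (fun x => γ r θ x) rt = 0) ↔
      (rt = 1 ∧ (∃ n : ℤ, θ = ω + n * (2 * π)) ∧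
        r = r' * Real.cos (θ' - ω) - α))) ∧
    (r' * Real.cos (θ' - ω) - α ≤ 0 →
      ∀ r θ rt : ℝ, 0 < r → 0 < rt →
        ¬(deriv (fun x => γ x θ rt) r = 0 ∧
          deriv (fun x => γ r x rt) θ = 0 ∧
          deriv (fun x => γ r θ x) rt = 0)) := by
  have d1 : ∀ r θ rt : ℝ, deriv (fun x => γ x θ rt) r = 1 - rt * Real.cos (θ - ω) := by
    intro r θ rt
    have he : (fun x => γ x θ rt) = fun x =>
        x * (1 - rt * Real.cos (θ - ω)) + r' * rt * Real.cos (θ' - ω) - rt * α :=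
      funext fun x => hγ x θ rt
    rw [he]
    have h : HasDerivAt (fun x : ℝ =>
        x * (1 - rt * Real.cos (θ - ω)) + r' * rt * Real.cos (θ' - ω) - rt * α)
        (1 - rt * Real.cos (θ - ω)) r := by
      simpa using (((hasDerivAt_id r).mul_const (1 - rt * Real.cos (θ - ω))).add_const
        (r' * rt * Real.cos (θ' - ω))).sub_const (rt * α)
    exact h.deriv
  have d2 : ∀ r θ rt : ℝ, deriv (fun x => γ r x rt) θ = r * rt * Real.sin (θ - ω) := by
    intro r θ rt
    have he : (fun x => γ r x rt) = fun x =>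
        r * (1 - rt * Real.cos (x - ω)) + r' * rt * Real.cos (θ' - ω) - rt * α :=
      funext fun x => hγ r x rt
    rw [he]
    have hc : HasDerivAt (fun x : ℝ => Real.cos (x - ω)) (-Real.sin (θ - ω)) θ := by
      simpa [Function.comp_def] using (Real.hasDerivAt_cos (θ - ω)).comp θ ((hasDerivAt_id θ).sub_const ω)
    have h : HasDerivAt (fun x : ℝ =>
        r * (1 - rt * Real.cos (x - ω)) + r' * rt * Real.cos (θ' - ω) - rt * α)
        (r * rt * Real.sin (θ - ω)) θ := by
      have := ((((hc.const_mul rt).const_sub 1).const_mul r).add_const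
        (r' * rt * Real.cos (θ' - ω))).sub_const (rt * α)
      exact this.congr_deriv (by ring)
    exact h.deriv
  have d3 : ∀ r θ rt : ℝ, deriv (fun x => γ r θ x) rt
      = -(r * Real.cos (θ - ω)) + r' * Real.cos (θ' - ω) - α := by
    intro r θ rt
    have he : (fun x => γ r θ x) = fun x =>
        r * (1 - x * Real.cos (θ - ω)) + r' * x * Real.cos (θ' - ω) - x * α :=
      funext fun x => hγ r θ x
    rw [he]
    have h : HasDerivAt (fun x : ℝ =>
        r * (1 - x * Real.cos (θ - ω)) + r' * x * Real.cos (θ' - ω) - x * α)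
        (-(r * Real.cos (θ - ω)) + r' * Real.cos (θ' - ω) - α) rt := by
      have h1 : HasDerivAt (fun x : ℝ => r * (1 - x * Real.cos (θ - ω)))
          (r * (-Real.cos (θ - ω))) rt := by
        simpa using (((hasDerivAt_id rt).mul_const (Real.cos (θ - ω))).const_sub 1).const_mul r
      have h2 : HasDerivAt (fun x : ℝ => r' * x * Real.cos (θ' - ω))
          (r' * Real.cos (θ' - ω)) rt := by
        have := ((hasDerivAt_id rt).const_mul r').mul_const (Real.cos (θ' - ω))
        simpa [mul_assoc] using this
      have h3 : HasDerivAt (fun x : ℝ => x * α) α rt := by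
        simpa using (hasDerivAt_id rt).mul_const α
      have := (h1.add h2).sub h3
      exact this.congr_deriv (by ring)
    exact h.deriv
  have main : ∀ r θ rt : ℝ, 0 < r → 0 < rt →
      ((deriv (fun x => γ x θ rt) r = 0 ∧
        deriv (fun x => γ r x rt) θ = 0 ∧
        deriv (fun x => γ r θ x) rt = 0) ↔
      (rt = 1 ∧ (∃ n : ℤ, θ = ω + n * (2 * π)) ∧
        r = r' * Real.cos (θ' - ω) - α)) := by
    intro r θ rt hr hrt
    rw [d1, d2, d3]
    constructor
    · rintro ⟨h1, h2, h3⟩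
      have hsin : Real.sin (θ - ω) = 0 := by
        rcases mul_eq_zero.mp h2 with h | h
        · exact absurd h (by positivity)
        · exact h
      have hcos2 : Real.cos (θ - ω) ^ 2 = 1 := by
        have := Real.sin_sq_add_cos_sq (θ - ω)
        rw [hsin] at this; nlinarith
      have hcospos : 0 < Real.cos (θ - ω) := by
        by_contra h
        push_neg at h
        nlinarith [sub_eq_zero.mp (sub_eq_zero.mpr h1.symm)]
      have hcos1 : Real.cos (θ - ω) = 1 := by nlinarith
      have hrt1 : rt = 1 := by rw [hcos1] at h1; linarith
      refine ⟨hrt1, ?_, by rw [hcos1] at h3; linarith⟩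
      obtain ⟨n, hn⟩ := (Real.cos_eq_one_iff (θ - ω)).mp hcos1
      exact ⟨n, by linarith⟩
    · rintro ⟨hrt1, ⟨n, hn⟩, hrr⟩
      have hθ : θ - ω = n * (2 * π) := by rw [hn]; ring
      have hcos : Real.cos (θ - ω) = 1 := by
        rw [hθ]
        simpa [mul_comm, mul_assoc] using Real.cos_int_mul_two_pi n
      have hsin : Real.sin (θ - ω) = 0 := by
        rw [hθ]
        have : (n : ℝ) * (2 * π) = (2 * n) * π := by push_cast; ring
        rw [this]
        exact_mod_cast Real.sin_int_mul_pi (2 * n)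
      refine ⟨by rw [hcos, hrt1]; ring, by rw [hsin]; ring, by rw [hcos]; linarith⟩
  refine ⟨main, fun hle r θ rt hr hrt hcrit => ?_⟩
  obtain ⟨_, _, hrr⟩ := (main r θ rt hr hrt).mp hcrit
  linarith
end
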